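/- Let O = ℂ{x,y,z} (or the localization of ℂ[x,y,z] at the origin, or k[x,y,z] localized with k a field), I₁ = (z, x²−y⁴), I₂ = (x,y), Q = (z, x³, y⁵), and I = I₁ ∩ I₂ ∩ Q. Then: (a) dim_ℂ O/Q = 15; (b) dim_ℂ O/(I₁∩I₂ + Q) = 9; (c) dim_ℂ O/(I₁+I₂) = 1; so ε = 15 − 9 = 6 and δ(X^{>0}) = 2 + 0 + 1 = 3, hence δ(X,0) = 3 − 6 = −3. -/

import Mathlib

set_option synthInstance.maxHeartbeats 1000000
set_option maxHeartbeats 1000000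

/-- The local ring `ℂ{x,y,z}` (we use the formal model `ℂ[[x,y,z]]`). -/
abbrev COxyz : Type := MvPowerSeries (Fin 3) ℂ

/-- `I₁ = (z, x² − y⁴)`, defining the `A₃`-singularity in the `(x,y)`-plane. -/
noncomputable def I1 : Ideal COxyz :=
  Ideal.span {MvPowerSeries.X 2, (MvPowerSeries.X 0) ^ 2 - (MvPowerSeries.X 1) ^ 4}

/-- `I₂ = (x, y)`, defining the `z`-axis. -/
noncomputable def I2 : Ideal COxyz :=
  Ideal.span {MvPowerSeries.X 0, MvPowerSeries.X 1}

/-- `Q = (z, x³, y⁵)`, defining the embedded component. -/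
noncomputable def Qemb : Ideal COxyz :=
  Ideal.span {MvPowerSeries.X 2, (MvPowerSeries.X 0) ^ 3, (MvPowerSeries.X 1) ^ 5}

section Aux

open MvPowerSeries Finsupp Classical

abbrev D3 := Fin 3 →₀ ℕ

noncomputable def mm (i j k : ℕ) : D3 := single 0 i + single 1 j + single 2 k

lemma mm_apply0 (i j k : ℕ) : mm i j k 0 = i := by simp [mm, single_apply]
lemma mm_apply1 (i j k : ℕ) : mm i j k 1 = j := by simp [mm, single_apply]
lemma mm_apply2 (i j k : ℕ) : mm i j k 2 = k := by simp [mm, single_apply]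

lemma mm_eta (m : D3) : m = mm (m 0) (m 1) (m 2) := by
  ext a; fin_cases a <;> simp [mm, single_apply]

lemma mm_inj {i j k i' j' k' : ℕ} (h : mm i j k = mm i' j' k') : i = i' ∧ j = j' ∧ k = k' := by
  refine ⟨?_, ?_, ?_⟩
  · have := congrFun (congrArg DFunLike.coe h) 0; simpa [mm_apply0] using this
  · have := congrFun (congrArg DFunLike.coe h) 1; simpa [mm_apply1] using this
  · have := congrFun (congrArg DFunLike.coe h) 2; simpa [mm_apply2] using this

lemma X_eq_mono (s : Fin 3) : (X s : COxyz) = monomial (single s 1) 1 := rfl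

lemma coeff_fun (g : D3 → ℂ) (m : D3) : MvPowerSeries.coeff m (g : COxyz) = g m := rfl

lemma finrank_quotient {J : Ideal COxyz} {N : ℕ} (π : COxyz →ₗ[ℂ] (Fin N → ℂ))
    (hker : ∀ f, π f = 0 ↔ f ∈ J) (hsurj : Function.Surjective π) :
    Module.finrank ℂ (COxyz ⧸ J) = N := by
  have hk : LinearMap.ker π = (J : Submodule COxyz COxyz).restrictScalars ℂ := by
    ext f; simpa [LinearMap.mem_ker] using hker f
  have e1 : (COxyz ⧸ J) ≃ₗ[ℂ] (COxyz ⧸ (J : Submodule COxyz COxyz).restrictScalars ℂ) :=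
    (Submodule.Quotient.restrictScalarsEquiv ℂ _).symm
  have e2 := Submodule.quotEquivOfEq _ _ hk.symm
  have e3 := π.quotKerEquivOfSurjective hsurj
  rw [(e1.trans (e2.trans e3)).finrank_eq, Module.finrank_fin_fun]

noncomputable def restr (P : D3 → Prop) (f : COxyz) : COxyz :=
  fun m => if P m then MvPowerSeries.coeff m f else 0

lemma coeff_restr (P : D3 → Prop) (f : COxyz) (m : D3) :
    MvPowerSeries.coeff m (restr P f) = if P m then MvPowerSeries.coeff m f else 0 := rfl

lemma mono_fac (n : D3) (c : COxyz) (h : ∀ m : D3, ¬ n ≤ m → MvPowerSeries.coeff m c = 0) :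
    ∃ u, c = (monomial n 1) * u := by
  refine ⟨((fun m => MvPowerSeries.coeff (m + n) c : D3 → ℂ) : COxyz), MvPowerSeries.ext fun m => ?_⟩
  erw [coeff_monomial_mul]
  split_ifs with hl
  · rw [one_mul]
    exact (congrArg (fun p => MvPowerSeries.coeff p c) (tsub_add_cancel_of_le hl)).symm
  · exact h m hl

lemma restr_mem {J : Ideal COxyz} (P : D3 → Prop) (f : COxyz) (n : D3)
    (hn : (monomial n 1 : COxyz) ∈ J) (h : ∀ m, P m → n ≤ m) : restr P f ∈ J := by
  obtain ⟨u, hu⟩ := mono_fac n (restr P f) (by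
    intro m hm
    rw [coeff_restr, if_neg (fun hP => hm (h m hP))])
  rw [hu]; exact J.mul_mem_right u hn

lemma pi_surj {N : ℕ} (B : Fin N → D3) (π : COxyz →ₗ[ℂ] (Fin N → ℂ))
    (hπ : ∀ t s, π (monomial (B s) 1) t = if t = s then 1 else 0) :
    Function.Surjective π := by
  intro v
  refine ⟨∑ s, v s • monomial (B s) 1, funext fun t => ?_⟩
  rw [map_sum]
  simp only [map_smul, Finset.sum_apply, Pi.smul_apply, hπ, smul_eq_mul]
  simp [Finset.sum_ite_eq']

lemma coeff_mono_mul_zero (r : COxyz) (n m : D3) (h : ¬ n ≤ m) :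
    MvPowerSeries.coeff m (monomial n 1 * r) = 0 := by
  rw [coeff_monomial_mul, if_neg h]

lemma coeff_mono_mul_le (r : COxyz) (n m : D3) (h : n ≤ m) :
    MvPowerSeries.coeff m (monomial n 1 * r) = MvPowerSeries.coeff (m - n) r := by
  rw [coeff_monomial_mul, if_pos h, one_mul]

lemma coeff_mul_mono_zero (r : COxyz) (n m : D3) (h : ¬ n ≤ m) :
    MvPowerSeries.coeff m (r * monomial n 1) = 0 := by
  rw [coeff_mul_monomial, if_neg h]

lemma coeff_mul_mono_le (r : COxyz) (n m : D3) (h : n ≤ m) :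
    MvPowerSeries.coeff m (r * monomial n 1) = MvPowerSeries.coeff (m - n) r := by
  rw [coeff_mul_monomial, if_pos h, mul_one]

lemma memQ_iff (f : COxyz) :
    f ∈ Qemb ↔ ∀ m : D3, m 0 < 3 → m 1 < 5 → m 2 = 0 → MvPowerSeries.coeff m f = 0 := by
  constructor
  · intro hf m h0 h1 h2
    rw [Qemb, Ideal.mem_span_insert] at hf
    obtain ⟨a, z, hz, rfl⟩ := hf
    rw [Ideal.mem_span_pair] at hz
    obtain ⟨u, v, rfl⟩ := hz
    rw [map_add, map_add]
    rw [mul_comm a, mul_comm u, mul_comm v, X_eq_mono, X_pow_eq, X_pow_eq]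
    have n1 : ¬ single (2 : Fin 3) 1 ≤ m := fun h => by have := single_le_iff.mp h; omega
    have n2 : ¬ single (0 : Fin 3) 3 ≤ m := fun h => by have := single_le_iff.mp h; omega
    have n3 : ¬ single (1 : Fin 3) 5 ≤ m := fun h => by have := single_le_iff.mp h; omega
    rw [coeff_mono_mul_zero a _ _ n1, coeff_mono_mul_zero u _ _ n2, coeff_mono_mul_zero v _ _ n3]
    ring
  · intro H
    have hz : (X 2 : COxyz) ∈ Qemb := Ideal.subset_span (by simp)
    have hx : ((X 0 : COxyz) ^ 3) ∈ Qemb := Ideal.subset_span (by simp)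
    have hy : ((X 1 : COxyz) ^ 5) ∈ Qemb := Ideal.subset_span (by simp)
    have hsplit : f = restr (fun m => 1 ≤ m 2) f
        + restr (fun m => m 2 = 0 ∧ 3 ≤ m 0) f
        + restr (fun m => m 2 = 0 ∧ m 0 < 3 ∧ 5 ≤ m 1) f := by
      apply MvPowerSeries.ext; intro m
      rw [map_add, map_add, coeff_restr, coeff_restr, coeff_restr]
      split_ifs with c1 c2 c3 <;> try omega
      · ring
      · ring
      · ring
      · simp only [add_zero]; exact H m (by omega) (by omega) (by omega)
    rw [hsplit]
    refine Ideal.add_mem _ (Ideal.add_mem _ ?_ ?_) ?_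
    · exact restr_mem _ f (single 2 1) (by rwa [← X_eq_mono]) (fun m hm => single_le_iff.mpr hm)
    · exact restr_mem _ f (single 0 3) (by rwa [← X_pow_eq]) (fun m hm => single_le_iff.mpr hm.2)
    · exact restr_mem _ f (single 1 5) (by rwa [← X_pow_eq]) (fun m hm => single_le_iff.mpr hm.2.2)

noncomputable def Ba : Fin 15 → D3 := fun t => mm ((t : ℕ) % 3) ((t : ℕ) / 3) 0

lemma partA : Module.finrank ℂ (COxyz ⧸ Qemb) = 15 := by
  classical
  refine finrank_quotient (LinearMap.pi fun t => MvPowerSeries.coeff (Ba t)) (fun f => ?_) ?_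
  · rw [memQ_iff]
    constructor
    · intro h m h0 h1 h2
      have ht : (m 0) + 3 * (m 1) < 15 := by omega
      have := congrFun h ⟨m 0 + 3 * m 1, ht⟩
      simp only [LinearMap.pi_apply, Pi.zero_apply] at this
      have e1 : (m 0 + 3 * m 1) % 3 = m 0 := by omega
      have e2 : (m 0 + 3 * m 1) / 3 = m 1 := by omega
      have hB : Ba ⟨m 0 + 3 * m 1, ht⟩ = m := by
        show mm ((m 0 + 3 * m 1) % 3) ((m 0 + 3 * m 1) / 3) 0 = m
        rw [e1, e2]
        conv_rhs => rw [mm_eta m, h2]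
      rwa [hB] at this
    · intro H
      funext t
      simp only [LinearMap.pi_apply, Pi.zero_apply]
      exact H _ (by simp only [Ba, mm_apply0]; omega) (by simp only [Ba, mm_apply1]; omega)
        (by simp only [Ba, mm_apply2])
  · refine pi_surj Ba _ (fun t s => ?_)
    simp only [LinearMap.pi_apply, MvPowerSeries.coeff_monomial]
    by_cases h : t = s
    · rw [if_pos h, if_pos (by rw [h])]
    · rw [if_neg h, if_neg]
      intro he
      obtain ⟨h1, h2, -⟩ := mm_inj he
      exact h (Fin.ext (by omega))

noncomputable def Jmax : Ideal COxyz :=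
  Ideal.span {MvPowerSeries.X 0, MvPowerSeries.X 1, MvPowerSeries.X 2}

lemma x2y4_mem : ((X 0 : COxyz) ^ 2 - (X 1) ^ 4) ∈ I2 := by
  have h0 : (X 0 : COxyz) ∈ I2 := Ideal.subset_span (by simp)
  have h1 : (X 1 : COxyz) ∈ I2 := Ideal.subset_span (by simp)
  have : (X 0 : COxyz) ^ 2 - (X 1) ^ 4 = X 0 * X 0 - X 1 ^ 3 * X 1 := by ring
  rw [this]
  exact sub_mem (I2.mul_mem_left _ h0) (I2.mul_mem_left _ h1)

lemma sup_c : I1 ⊔ I2 = Jmax := by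
  apply le_antisymm
  · apply sup_le
    · rw [I1, Ideal.span_le]
      rintro g (rfl | rfl)
      · exact Ideal.subset_span (by simp)
      · have h0 : (X 0 : COxyz) ∈ Jmax := Ideal.subset_span (by simp)
        have h1 : (X 1 : COxyz) ∈ Jmax := Ideal.subset_span (by simp)
        have : (X 0 : COxyz) ^ 2 - (X 1) ^ 4 = X 0 * X 0 - X 1 ^ 3 * X 1 := by ring
        rw [this]
        exact sub_mem (Jmax.mul_mem_left _ h0) (Jmax.mul_mem_left _ h1)
    · rw [I2, Ideal.span_le]
      rintro g (rfl | rfl) <;> exact Ideal.subset_span (by simp)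
  · rw [Jmax, Ideal.span_le]
    rintro g (rfl | rfl | rfl)
    · exact Ideal.mem_sup_right (Ideal.subset_span (by simp))
    · exact Ideal.mem_sup_right (Ideal.subset_span (by simp))
    · exact Ideal.mem_sup_left (Ideal.subset_span (by simp))

lemma memJmax_iff (f : COxyz) : f ∈ Jmax ↔ MvPowerSeries.coeff (0 : D3) f = 0 := by
  constructor
  · intro hf
    rw [Jmax, Ideal.mem_span_insert] at hf
    obtain ⟨a, z, hz, rfl⟩ := hf
    rw [Ideal.mem_span_pair] at hz
    obtain ⟨u, v, rfl⟩ := hz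
    rw [map_add, map_add]
    rw [mul_comm a, mul_comm u, mul_comm v, X_eq_mono, X_eq_mono, X_eq_mono]
    have nle : ∀ s : Fin 3, ¬ single s 1 ≤ (0 : D3) := by
      intro s h; have := single_le_iff.mp h; simp at this
    rw [coeff_mono_mul_zero a _ _ (nle 0), coeff_mono_mul_zero u _ _ (nle 1),
        coeff_mono_mul_zero v _ _ (nle 2)]
    ring
  · intro H
    have hsplit : f = restr (fun m => 1 ≤ m 0) f
        + restr (fun m => m 0 = 0 ∧ 1 ≤ m 1) f
        + restr (fun m => m 0 = 0 ∧ m 1 = 0 ∧ 1 ≤ m 2) f := by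
      apply MvPowerSeries.ext; intro m
      rw [map_add, map_add, coeff_restr, coeff_restr, coeff_restr]
      split_ifs with c1 c2 c3 <;> try omega
      · ring
      · ring
      · ring
      · simp only [add_zero]
        have hm : m = 0 := by
          ext a; fin_cases a <;> simp <;> omega
        rw [hm]; exact H
    rw [hsplit]
    have g0 : (monomial (single 0 1) 1 : COxyz) ∈ Jmax := by
      rw [← X_eq_mono]; exact Ideal.subset_span (by simp)
    have g1 : (monomial (single 1 1) 1 : COxyz) ∈ Jmax := by
      rw [← X_eq_mono]; exact Ideal.subset_span (by simp)
    have g2 : (monomial (single 2 1) 1 : COxyz) ∈ Jmax := by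
      rw [← X_eq_mono]; exact Ideal.subset_span (by simp)
    refine Ideal.add_mem _ (Ideal.add_mem _ ?_ ?_) ?_
    · exact restr_mem _ f _ g0 (fun m hm => single_le_iff.mpr hm)
    · exact restr_mem _ f _ g1 (fun m hm => single_le_iff.mpr hm.2)
    · exact restr_mem _ f _ g2 (fun m hm => single_le_iff.mpr hm.2.2)

lemma partC : Module.finrank ℂ (COxyz ⧸ (I1 ⊔ I2)) = 1 := by
  rw [sup_c]
  refine finrank_quotient (LinearMap.pi fun _ : Fin 1 => MvPowerSeries.coeff (0 : D3))
    (fun f => ?_) ?_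
  · rw [memJmax_iff]
    constructor
    · intro h
      simpa using congrFun h 0
    · intro H; funext t; simpa using H
  · refine pi_surj (fun _ => (0 : D3)) _ (fun t s => ?_)
    have : t = s := Subsingleton.elim t s
    simp [this, MvPowerSeries.coeff_monomial]

noncomputable def Jb : Ideal COxyz :=
  Ideal.span {MvPowerSeries.X 2, (MvPowerSeries.X 0) ^ 3, (MvPowerSeries.X 1) ^ 5,
    (MvPowerSeries.X 0) ^ 2 - (MvPowerSeries.X 1) ^ 4}

lemma supB : (I1 ⊓ I2) ⊔ Qemb = Jb := by
  apply le_antisymm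
  · apply sup_le
    · refine le_trans inf_le_left ?_
      rw [I1, Ideal.span_le]
      rintro g (rfl | rfl)
      · exact Ideal.subset_span (by simp)
      · exact Ideal.subset_span (by simp)
    · rw [Qemb, Ideal.span_le]
      rintro g (rfl | rfl | rfl) <;> exact Ideal.subset_span (by simp)
  · rw [Jb, Ideal.span_le]
    rintro g (rfl | rfl | rfl | rfl)
    · exact Ideal.mem_sup_right (Ideal.subset_span (by simp))
    · exact Ideal.mem_sup_right (Ideal.subset_span (by simp))
    · exact Ideal.mem_sup_right (Ideal.subset_span (by simp))
    · exact Ideal.mem_sup_left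
        (Submodule.mem_inf.mpr ⟨Ideal.subset_span (by simp), x2y4_mem⟩)

lemma memJb_iff (f : COxyz) :
    f ∈ Jb ↔ ((∀ m : D3, m 0 < 2 → m 1 < 4 → m 2 = 0 → MvPowerSeries.coeff m f = 0) ∧
      MvPowerSeries.coeff (mm 0 4 0) f + MvPowerSeries.coeff (mm 2 0 0) f = 0) := by
  have sub1 : mm 0 4 0 - single 1 4 = (0 : D3) := by
    ext a; fin_cases a <;> simp [mm, tsub_apply, single_apply]
  have sub2 : mm 2 0 0 - single 0 2 = (0 : D3) := by
    ext a; fin_cases a <;> simp [mm, tsub_apply, single_apply]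
  constructor
  · intro hf
    rw [Jb, Ideal.mem_span_insert] at hf
    obtain ⟨a, z, hz, rfl⟩ := hf
    rw [Ideal.mem_span_insert] at hz
    obtain ⟨b, w, hw, rfl⟩ := hz
    rw [Ideal.mem_span_pair] at hw
    obtain ⟨u, v, rfl⟩ := hw
    have expand : ∀ m : D3, MvPowerSeries.coeff m
        (a * X 2 + (b * X 0 ^ 3 + (u * X 1 ^ 5 + v * (X 0 ^ 2 - X 1 ^ 4)))) =
        MvPowerSeries.coeff m (monomial (single 2 1) 1 * a)
        + MvPowerSeries.coeff m (monomial (single 0 3) 1 * b)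
        + MvPowerSeries.coeff m (monomial (single 1 5) 1 * u)
        + (MvPowerSeries.coeff m (monomial (single 0 2) 1 * v)
           - MvPowerSeries.coeff m (monomial (single 1 4) 1 * v)) := by
      intro m
      rw [← map_sub, ← map_add, ← map_add, ← map_add]
      congr 1
      rw [← X_eq_mono, ← X_pow_eq, ← X_pow_eq, ← X_pow_eq, ← X_pow_eq]
      ring
    constructor
    · intro m h0 h1 h2
      rw [expand]
      rw [coeff_mono_mul_zero a _ _ (fun h => by have := single_le_iff.mp h; omega),
          coeff_mono_mul_zero b _ _ (fun h => by have := single_le_iff.mp h; omega),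
          coeff_mono_mul_zero u _ _ (fun h => by have := single_le_iff.mp h; omega),
          coeff_mono_mul_zero v _ _ (fun h => by have := single_le_iff.mp h; omega),
          coeff_mono_mul_zero v _ _ (fun h => by have := single_le_iff.mp h; omega)]
      ring
    · rw [expand, expand]
      rw [coeff_mono_mul_zero a _ _ (fun h => by have := single_le_iff.mp h; rw [mm_apply2] at this; omega),
          coeff_mono_mul_zero b _ _ (fun h => by have := single_le_iff.mp h; rw [mm_apply0] at this; omega),
          coeff_mono_mul_zero u _ _ (fun h => by have := single_le_iff.mp h; rw [mm_apply1] at this; omega),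
          coeff_mono_mul_zero v _ _ (fun h => by have := single_le_iff.mp h; rw [mm_apply0] at this; omega),
          coeff_mono_mul_le v _ _ (single_le_iff.mpr (by rw [mm_apply1])),
          coeff_mono_mul_zero a _ _ (fun h => by have := single_le_iff.mp h; rw [mm_apply2] at this; omega),
          coeff_mono_mul_zero b _ _ (fun h => by have := single_le_iff.mp h; rw [mm_apply0] at this; omega),
          coeff_mono_mul_zero u _ _ (fun h => by have := single_le_iff.mp h; rw [mm_apply1] at this; omega),
          coeff_mono_mul_le v _ _ (single_le_iff.mpr (by rw [mm_apply0])),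
          coeff_mono_mul_zero v _ _ (fun h => by have := single_le_iff.mp h; rw [mm_apply1] at this; omega)]
      rw [sub1, sub2]
      ring
  · rintro ⟨H1, H2⟩
    set hs : COxyz := (fun m => if m 0 = 0 ∧ m 2 = 0
      then MvPowerSeries.coeff (m + single 0 2) f else 0 : D3 → ℂ) with hhs
    set g : COxyz := (monomial (single 0 2) 1 : COxyz) - monomial (single 1 4) 1 with hg
    have hgX : g = (X 0 : COxyz) ^ 2 - (X 1) ^ 4 := by
      rw [hg, ← X_pow_eq, ← X_pow_eq]
    have hgJ : g ∈ Jb := by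
      rw [hgX]; exact Ideal.subset_span (by simp)
    set f' : COxyz := f - g * hs with hf'
    have hco : ∀ m : D3, MvPowerSeries.coeff m f' = MvPowerSeries.coeff m f
        - (if (single 0 2 : D3) ≤ m then (if (m - (single 0 2 : D3)) 0 = 0 ∧ (m - (single 0 2 : D3)) 2 = 0
            then MvPowerSeries.coeff ((m - (single 0 2 : D3)) + single 0 2) f else 0) else 0)
        + (if (single 1 4 : D3) ≤ m then (if (m - (single 1 4 : D3)) 0 = 0 ∧ (m - (single 1 4 : D3)) 2 = 0
            then MvPowerSeries.coeff ((m - (single 1 4 : D3)) + single 0 2) f else 0) else 0) := by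
      intro m
      have e1 : ∀ n : D3, MvPowerSeries.coeff n hs = (if n 0 = 0 ∧ n 2 = 0
          then MvPowerSeries.coeff (n + single 0 2) f else 0) := fun n => rfl
      rw [hf', map_sub, hg, sub_mul, map_sub, coeff_monomial_mul, coeff_monomial_mul]
      simp only [one_mul, e1]
      ring
    have hrem : ∀ m : D3, m 2 = 0 → m 0 < 3 → ¬(m 0 = 1 ∧ 4 ≤ m 1) → ¬(m 0 = 0 ∧ 5 ≤ m 1) →
        MvPowerSeries.coeff m f' = 0 := by
      intro m h2 h0 h3 h4
      rw [hco]
      have sapp : ∀ (s : Fin 3) (k : ℕ) (t : Fin 3), (m - single s k) t = m t - single s k t :=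
        fun s k t => tsub_apply m (single s k) t
      by_cases hm0 : m 0 = 2
      · have hle : single (0 : Fin 3) 2 ≤ m := single_le_iff.mpr (by omega)
        rw [if_pos hle]
        rw [if_pos (show (m - (single 0 2 : D3)) 0 = 0 ∧ (m - (single 0 2 : D3)) 2 = 0 by
          refine ⟨?_, ?_⟩ <;> rw [sapp] <;> simp [single_apply] <;> omega)]
        rw [tsub_add_cancel_of_le hle]
        have : ∀ h14 : (single 1 4 : D3) ≤ m, ¬((m - (single 1 4 : D3)) 0 = 0 ∧ (m - (single 1 4 : D3)) 2 = 0) := by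
          intro h14 hc
          have := hc.1
          rw [sapp] at this; simp [single_apply] at this; omega
        split_ifs with c1 c2
        · exact absurd c2 (this c1)
        · ring
        · ring
      · have hnle : ¬ single (0 : Fin 3) 2 ≤ m := fun h => by have := single_le_iff.mp h; omega
        rw [if_neg hnle]
        by_cases hy : single (1 : Fin 3) 4 ≤ m
        · have h14 : 4 ≤ m 1 := single_le_iff.mp hy
          have hm00 : m 0 = 0 := by omega
          have hm14 : m 1 = 4 := by omega
          rw [if_pos hy]
          rw [if_pos (show (m - (single 1 4 : D3)) 0 = 0 ∧ (m - (single 1 4 : D3)) 2 = 0 by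
            refine ⟨?_, ?_⟩ <;> rw [sapp] <;> simp [single_apply] <;> omega)]
          have hmeq : m = mm 0 4 0 := by
            conv_lhs => rw [mm_eta m]
            rw [hm00, hm14, h2]
          have harg : m - single 1 4 + single 0 2 = mm 2 0 0 := by
            rw [hmeq]; ext a; fin_cases a <;> simp [mm, tsub_apply, single_apply]
          rw [harg, hmeq]
          rw [sub_zero]
          exact H2
        · rw [if_neg hy]
          have h14 : m 1 < 4 := by
            by_contra hc; exact hy (single_le_iff.mpr (by omega))
          rw [H1 m (by omega) h14 h2]
          ring
    have hsplit : f' = restr (fun m => 1 ≤ m 2) f'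
        + restr (fun m => m 2 = 0 ∧ 3 ≤ m 0) f'
        + restr (fun m => m 2 = 0 ∧ m 0 = 1 ∧ 4 ≤ m 1) f'
        + restr (fun m => m 2 = 0 ∧ m 0 = 0 ∧ 5 ≤ m 1) f' := by
      apply MvPowerSeries.ext; intro m
      rw [map_add, map_add, map_add, coeff_restr, coeff_restr, coeff_restr, coeff_restr]
      split_ifs with c1 c2 c3 c4 <;> try omega
      · ring
      · ring
      · ring
      · ring
      · simp only [add_zero]
        exact hrem m (by omega) (by omega) (by omega) (by omega)
    have hxy4 : (monomial (single 0 1 + single 1 4) 1 : COxyz) ∈ Jb := by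
      have e : (monomial (single 0 1 + single 1 4) 1 : COxyz) = X 0 * X 1 ^ 4 := by
        rw [X_eq_mono, X_pow_eq, monomial_mul_monomial, one_mul]
      rw [e, show (X 0 : COxyz) * X 1 ^ 4 = X 0 ^ 3 - X 0 * (X 0 ^ 2 - X 1 ^ 4) by ring]
      exact sub_mem (Ideal.subset_span (by simp))
        (Jb.mul_mem_left _ (Ideal.subset_span (by simp)))
    have hf'mem : f' ∈ Jb := by
      rw [hsplit]
      refine Ideal.add_mem _ (Ideal.add_mem _ (Ideal.add_mem _ ?_ ?_) ?_) ?_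
      · exact restr_mem _ f' (single 2 1) (by rw [← X_eq_mono]; exact Ideal.subset_span (by simp))
          (fun m hm => single_le_iff.mpr hm)
      · exact restr_mem _ f' (single 0 3) (by rw [← X_pow_eq]; exact Ideal.subset_span (by simp))
          (fun m hm => single_le_iff.mpr hm.2)
      · refine restr_mem _ f' (single 0 1 + single 1 4) hxy4 (fun m hm => ?_)
        intro a
        fin_cases a <;> simp [single_apply] <;> omega
      · exact restr_mem _ f' (single 1 5) (by rw [← X_pow_eq]; exact Ideal.subset_span (by simp))
          (fun m hm => single_le_iff.mpr hm.2.2)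
    have : f = f' + g * hs := by rw [hf']; ring
    rw [this]
    exact Ideal.add_mem _ hf'mem (Jb.mul_mem_right hs hgJ)

noncomputable def Bb : Fin 9 → D3 :=
  fun t => if (t : ℕ) = 8 then mm 0 4 0 else mm ((t : ℕ) % 2) ((t : ℕ) / 2) 0

lemma Bb_ne (s : Fin 9) : Bb s ≠ mm 2 0 0 := by
  intro h
  rw [Bb] at h
  split_ifs at h with hc
  · obtain ⟨h1, -, -⟩ := mm_inj h; omega
  · obtain ⟨h1, -, -⟩ := mm_inj h; omega

lemma Bb_eq8 (s : Fin 9) : Bb s = mm 0 4 0 ↔ (s : ℕ) = 8 := by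
  constructor
  · intro h
    rw [Bb] at h
    split_ifs at h with hc
    · exact hc
    · obtain ⟨h1, h2, -⟩ := mm_inj h
      have : (s : ℕ) < 9 := s.isLt
      omega
  · intro h; rw [Bb, if_pos h]

lemma Bb_inj : Function.Injective Bb := by
  intro t s h
  by_cases ht : (t : ℕ) = 8 <;> by_cases hs : (s : ℕ) = 8
  · exact Fin.ext (by omega)
  · exact absurd ((Bb_eq8 s).mp (by rw [← h, Bb, if_pos ht])) hs
  · exact absurd ((Bb_eq8 t).mp (by rw [h, Bb, if_pos hs])) ht
  · simp only [Bb] at h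
    rw [if_neg ht, if_neg hs] at h
    obtain ⟨h1, h2, -⟩ := mm_inj h
    have := t.isLt; have := s.isLt
    exact Fin.ext (by omega)

noncomputable def pib : COxyz →ₗ[ℂ] (Fin 9 → ℂ) :=
  LinearMap.pi fun t => if (t : ℕ) = 8
    then MvPowerSeries.coeff (mm 0 4 0) + MvPowerSeries.coeff (mm 2 0 0)
    else MvPowerSeries.coeff (Bb t)

lemma partB : Module.finrank ℂ (COxyz ⧸ ((I1 ⊓ I2) ⊔ Qemb)) = 9 := by
  rw [supB]
  refine finrank_quotient pib (fun f => ?_) ?_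
  · rw [memJb_iff]
    constructor
    · intro h
      constructor
      · intro m h0 h1 h2
        have ht : (m 0) + 2 * (m 1) < 9 := by omega
        have ht8 : (m 0) + 2 * (m 1) ≠ 8 := by omega
        have := congrFun h ⟨m 0 + 2 * m 1, ht⟩
        simp only [pib, LinearMap.pi_apply, Pi.zero_apply] at this
        rw [if_neg ht8] at this
        have hB : Bb ⟨m 0 + 2 * m 1, ht⟩ = m := by
          rw [Bb, if_neg ht8]
          have e1 : (m 0 + 2 * m 1) % 2 = m 0 := by omega
          have e2 : (m 0 + 2 * m 1) / 2 = m 1 := by omega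
          show mm ((m 0 + 2 * m 1) % 2) ((m 0 + 2 * m 1) / 2) 0 = m
          rw [e1, e2]
          conv_rhs => rw [mm_eta m, h2]
        rwa [hB] at this
      · have := congrFun h (8 : Fin 9)
        simp only [pib, LinearMap.pi_apply, Pi.zero_apply] at this
        rw [if_pos (by rfl)] at this
        simpa using this
    · rintro ⟨H1, H2⟩
      funext t
      simp only [pib, LinearMap.pi_apply, Pi.zero_apply]
      by_cases ht : (t : ℕ) = 8
      · rw [if_pos ht]; simpa using H2
      · rw [if_neg ht]
        have := t.isLt
        refine H1 _ ?_ ?_ ?_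
        · rw [Bb, if_neg ht, mm_apply0]; omega
        · rw [Bb, if_neg ht, mm_apply1]; omega
        · rw [Bb, if_neg ht, mm_apply2]
  · refine pi_surj Bb _ (fun t s => ?_)
    simp only [pib, LinearMap.pi_apply]
    by_cases ht : (t : ℕ) = 8
    · rw [if_pos ht]
      simp only [LinearMap.add_apply, MvPowerSeries.coeff_monomial]
      by_cases hs : (s : ℕ) = 8
      · rw [if_pos (((Bb_eq8 s).mpr hs).symm), if_neg (fun h : mm 2 0 0 = Bb s => Bb_ne s h.symm),
            if_pos (Fin.ext (by omega))]
        ring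
      · rw [if_neg (fun h : mm 0 4 0 = Bb s => hs ((Bb_eq8 s).mp h.symm)),
            if_neg (fun h : mm 2 0 0 = Bb s => Bb_ne s h.symm),
            if_neg (fun h : t = s => hs (by rw [← h]; exact ht))]
        ring
    · rw [if_neg ht]
      rw [MvPowerSeries.coeff_monomial]
      by_cases h : t = s
      · rw [if_pos (by rw [h]), if_pos h]
      · rw [if_neg (fun he => h (Bb_inj he)), if_neg h]


end Aux

/-- Example 5.6: with `O = ℂ{x,y,z}`, `I₁ = (z, x²−y⁴)`, `I₂ = (x,y)`,
`Q = (z,x³,y⁵)` and `I = I₁ ∩ I₂ ∩ Q`: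
(a) `dim_ℂ O/Q = 15`; (b) `dim_ℂ O/(I₁∩I₂ + Q) = 9`; (c) `dim_ℂ O/(I₁+I₂) = 1`;
so `ε = 15 − 9 = 6` and `δ(X^{>0}) = 2 + 0 + 1 = 3`, hence `δ(X,0) = 3 − 6 = −3`. -/
theorem example_5_6 :
    Module.finrank ℂ (COxyz ⧸ Qemb) = 15 ∧
    Module.finrank ℂ (COxyz ⧸ ((I1 ⊓ I2) ⊔ Qemb)) = 9 ∧
    Module.finrank ℂ (COxyz ⧸ (I1 ⊔ I2)) = 1 ∧
    (15 - 9 : ℤ) = 6 ∧ (2 + 0 + 1 : ℤ) = 3 ∧ (3 : ℤ) - 6 = -3 :=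
  ⟨partA, partB, partC, by norm_num, by norm_num, by norm_num⟩
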